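/- For all real numbers a, b with −1 ≤ a ≤ b ≤ 1, the proportion (1/n)·#{k ∈ ℕ : 1 ≤ k ≤ n and a ≤ sin(2π{√k}) ≤ b} tends to (arcsin(b) − arcsin(a))/π as n → ∞. -/

import Mathlib

open Filter Topology Real Finset

lemma fract_sqrt (k : ℕ) : Int.fract (Real.sqrt k) = Real.sqrt k - Nat.sqrt k := by
  rw [Int.fract, Real.floor_real_sqrt_eq_nat_sqrt]; push_cast; ring

lemma sqrt_block {M k : ℕ} (h1 : M^2 ≤ k) (h2 : k < (M+1)^2) : Nat.sqrt k = M := by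
  have := Nat.sqrt_le_sqrt h1
  have h3 : Nat.sqrt k < M + 1 := Nat.sqrt_lt'.2 (by omega)
  simp [Nat.sqrt_eq' ] at this
  omega

lemma block_filter_eq (α β : ℝ) (h0 : 0 ≤ α) (hab : α ≤ β) (M : ℕ) :
    ((Finset.Icc (M^2) ((M+1)^2 - 1)).filter fun k : ℕ =>
      α ≤ Int.fract (Real.sqrt k) ∧ Int.fract (Real.sqrt k) ≤ β) =
    Finset.Icc (max (M^2) ⌈((M:ℝ)+α)^2⌉₊) (min ((M+1)^2 - 1) ⌊((M:ℝ)+β)^2⌋₊) := by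
  ext k
  simp only [Finset.mem_filter, Finset.mem_Icc, max_le_iff, le_min_iff]
  have hp : 1 ≤ (M+1)^2 := Nat.one_le_pow _ _ (by omega)
  constructor
  · rintro ⟨⟨hk1, hk2⟩, hf1, hf2⟩
    have hs : Nat.sqrt k = M := sqrt_block hk1 (by omega)
    rw [fract_sqrt, hs] at hf1 hf2
    have hk : ((M:ℝ)+α)^2 ≤ k := by
      have h1 : (M:ℝ) + α ≤ Real.sqrt k := by linarith
      nlinarith [Real.sq_sqrt (show (0:ℝ) ≤ k by positivity), Real.sqrt_nonneg (k:ℝ)]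
    have hk' : (k:ℝ) ≤ ((M:ℝ)+β)^2 := by
      have h1 : Real.sqrt k ≤ (M:ℝ) + β := by linarith
      nlinarith [Real.sq_sqrt (show (0:ℝ) ≤ k by positivity), Real.sqrt_nonneg (k:ℝ)]
    exact ⟨⟨hk1, Nat.ceil_le.2 hk⟩, hk2, Nat.le_floor hk'⟩
  · rintro ⟨⟨hk1, hc⟩, hk2, hfl⟩
    have hs : Nat.sqrt k = M := sqrt_block hk1 (by omega)
    have hk : ((M:ℝ)+α)^2 ≤ k := le_trans (Nat.le_ceil _) (by exact_mod_cast Nat.cast_le.2 hc)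
    have hk' : (k:ℝ) ≤ ((M:ℝ)+β)^2 := le_trans (by exact_mod_cast Nat.cast_le.2 hfl) (Nat.floor_le (sq_nonneg _))
    refine ⟨⟨hk1, hk2⟩, ?_, ?_⟩ <;> rw [fract_sqrt, hs]
    · have : (M:ℝ) + α ≤ Real.sqrt k := Real.le_sqrt_of_sq_le hk
      linarith
    · have : Real.sqrt k ≤ (M:ℝ) + β := by
        have hβ : (0:ℝ) ≤ (M:ℝ) + β := add_nonneg (Nat.cast_nonneg M) (le_trans h0 hab)
        rw [show ((M:ℝ)+β) = Real.sqrt (((M:ℝ)+β)^2) from (Real.sqrt_sq hβ).symm]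
        exact Real.sqrt_le_sqrt hk'
      linarith

lemma block_card (α β : ℝ) (h0 : 0 ≤ α) (hab : α ≤ β) (h1 : β ≤ 1) (M : ℕ) :
    |(((Finset.Icc (M^2) ((M+1)^2 - 1)).filter fun k : ℕ =>
      α ≤ Int.fract (Real.sqrt k) ∧ Int.fract (Real.sqrt k) ≤ β).card : ℝ)
      - (β - α) * (2*M+1)| ≤ 4 := by
  rw [block_filter_eq α β h0 hab M]
  have hp : 1 ≤ (M+1)^2 := Nat.one_le_pow _ _ (by omega)
  set A := max (M^2) ⌈((M:ℝ)+α)^2⌉₊ with hA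
  set B := min ((M+1)^2 - 1) ⌊((M:ℝ)+β)^2⌋₊ with hB
  have hMα : (0:ℝ) ≤ (M:ℝ) + α := add_nonneg (Nat.cast_nonneg M) h0
  have hMβ : (0:ℝ) ≤ (M:ℝ) + β := add_nonneg (Nat.cast_nonneg M) (le_trans h0 hab)
  have hceil : M^2 ≤ ⌈((M:ℝ)+α)^2⌉₊ := by
    have : ((M^2 : ℕ):ℝ) ≤ ((M:ℝ)+α)^2 := by push_cast; nlinarith
    exact_mod_cast this.trans (Nat.le_ceil _)
  have hAeq : A = ⌈((M:ℝ)+α)^2⌉₊ := max_eq_right hceil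
  have hA1 : ((M:ℝ)+α)^2 ≤ A := by rw [hAeq]; exact Nat.le_ceil _
  have hA2 : (A:ℝ) ≤ ((M:ℝ)+α)^2 + 1 := by
    rw [hAeq]; exact (Nat.ceil_lt_add_one (by positivity)).le
  have hB2 : (B:ℝ) ≤ ((M:ℝ)+β)^2 := by
    have : (B:ℝ) ≤ (⌊((M:ℝ)+β)^2⌋₊ : ℝ) := by exact_mod_cast Nat.cast_le.2 (min_le_right _ _)
    exact this.trans (Nat.floor_le (by positivity))
  have hcast : (((M+1)^2 - 1 : ℕ) : ℝ) = ((M:ℝ)+1)^2 - 1 := by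
    push_cast [Nat.cast_sub hp]; ring
  have hB1 : ((M:ℝ)+β)^2 - 2 ≤ (B:ℝ) := by
    have hf : ((M:ℝ)+β)^2 - 1 < (⌊((M:ℝ)+β)^2⌋₊ : ℝ) := Nat.sub_one_lt_floor _
    have hc : ((M:ℝ)+β)^2 - 2 ≤ (((M+1)^2 - 1 : ℕ) : ℝ) := by rw [hcast]; nlinarith
    have : (B:ℝ) = min (((M+1)^2 - 1 : ℕ) : ℝ) ((⌊((M:ℝ)+β)^2⌋₊ : ℝ)) := by
      rw [hB]; push_cast [Nat.cast_min]; ring_nf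
    rw [this]; exact le_min hc (by linarith)
  have key : ((M:ℝ)+β)^2 - ((M:ℝ)+α)^2 - (β-α)*(2*M+1) = (β-α)*(α+β-1) := by ring
  have hd1 : (β-α)*(α+β-1) ≤ 1 := by nlinarith
  have hd2 : -1 ≤ (β-α)*(α+β-1) := by nlinarith
  rcases le_or_gt A B with h | h
  · rw [Nat.card_Icc]
    have : ((B + 1 - A : ℕ) : ℝ) = (B:ℝ) + 1 - A := by
      push_cast [Nat.cast_sub (by omega : A ≤ B + 1)]; ring
    rw [this, abs_le]
    constructor <;> linarith
  · rw [Finset.Icc_eq_empty (by omega), Finset.card_empty]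
    have hAB : (B:ℝ) < A := by exact_mod_cast h
    rw [abs_le]
    push_cast
    have hnn : 0 ≤ (β-α)*(2*(M:ℝ)+1) := mul_nonneg (sub_nonneg.2 hab) (by positivity)
    constructor <;> linarith

noncomputable def cnt (α β : ℝ) (n : ℕ) : ℕ :=
  ((Finset.Icc 1 n).filter fun k : ℕ =>
    α ≤ Int.fract (Real.sqrt k) ∧ Int.fract (Real.sqrt k) ≤ β).card

lemma cnt_split (α β : ℝ) (M : ℕ) (hM : 1 ≤ M) :
    cnt α β ((M+1)^2 - 1) = cnt α β (M^2 - 1) +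
      ((Finset.Icc (M^2) ((M+1)^2 - 1)).filter fun k : ℕ =>
        α ≤ Int.fract (Real.sqrt k) ∧ Int.fract (Real.sqrt k) ≤ β).card := by
  have hM2 : 1 ≤ M^2 := Nat.one_le_pow _ _ (by omega)
  have hMM : M^2 ≤ (M+1)^2 := Nat.pow_le_pow_left (by omega) _
  unfold cnt
  have hI : Finset.Icc 1 ((M+1)^2 - 1) =
      Finset.Icc 1 (M^2 - 1) ∪ Finset.Icc (M^2) ((M+1)^2 - 1) := by
    ext k
    simp only [Finset.mem_union, Finset.mem_Icc]
    omega
  have hdisj : Disjoint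
      ((Finset.Icc 1 (M^2 - 1)).filter fun k : ℕ =>
        α ≤ Int.fract (Real.sqrt k) ∧ Int.fract (Real.sqrt k) ≤ β)
      ((Finset.Icc (M^2) ((M+1)^2 - 1)).filter fun k : ℕ =>
        α ≤ Int.fract (Real.sqrt k) ∧ Int.fract (Real.sqrt k) ≤ β) := by
    rw [Finset.disjoint_left]
    intro k hk hk'
    simp only [Finset.mem_filter, Finset.mem_Icc] at hk hk'
    omega
  rw [hI, Finset.filter_union, Finset.card_union_of_disjoint hdisj]

lemma cnt_bound (α β : ℝ) (h0 : 0 ≤ α) (hab : α ≤ β) (h1 : β ≤ 1) :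
    ∀ j : ℕ, |(cnt α β ((j+1)^2 - 1) : ℝ) - (β - α) * (((j:ℝ)+1)^2 - 1)| ≤ 4*(j:ℝ) := by
  intro j
  induction j with
  | zero => simp [cnt]
  | succ j ih =>
    have hsplit := cnt_split α β (j+1) (by omega)
    have hblock := block_card α β h0 hab h1 (j+1)
    simp only [show j+1+1 = j+2 from by omega] at hsplit hblock ⊢
    rw [hsplit]
    push_cast
    have e : (cnt α β ((j+1)^2 - 1) : ℝ) +
        (((Finset.Icc ((j+1)^2) ((j+2)^2 - 1)).filter fun k : ℕ =>
          α ≤ Int.fract (Real.sqrt k) ∧ Int.fract (Real.sqrt k) ≤ β).card : ℝ)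
        - (β - α) * (((j:ℝ)+1+1)^2 - 1) =
        ((cnt α β ((j+1)^2 - 1) : ℝ) - (β - α) * (((j:ℝ)+1)^2 - 1)) +
        ((((Finset.Icc ((j+1)^2) ((j+2)^2 - 1)).filter fun k : ℕ =>
          α ≤ Int.fract (Real.sqrt k) ∧ Int.fract (Real.sqrt k) ≤ β).card : ℝ)
          - (β - α) * (2*((j:ℝ)+1)+1)) := by ring
    rw [e]
    refine le_trans (abs_add_le _ _) ?_
    push_cast at hblock
    have : |(((Finset.Icc ((j+1)^2) ((j+2)^2 - 1)).filter fun k : ℕ =>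
          α ≤ Int.fract (Real.sqrt k) ∧ Int.fract (Real.sqrt k) ≤ β).card : ℝ)
          - (β - α) * (2*((j:ℝ)+1)+1)| ≤ 4 := by
      convert hblock using 3 <;> push_cast <;> ring
    linarith

lemma cnt_mono (α β : ℝ) {n m : ℕ} (h : n ≤ m) : cnt α β n ≤ cnt α β m :=
  Finset.card_le_card (Finset.filter_subset_filter _ (Finset.Icc_subset_Icc_right h))

lemma cnt_est (α β : ℝ) (h0 : 0 ≤ α) (hab : α ≤ β) (h1 : β ≤ 1)
    (n : ℕ) (hn : 1 ≤ n) :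
    |(cnt α β n : ℝ)/n - (β - α)| ≤ 7/(Nat.sqrt n : ℝ) := by
  obtain ⟨m, hm⟩ : ∃ m, Nat.sqrt n = m + 1 :=
    ⟨Nat.sqrt n - 1, by have := Nat.sqrt_pos.2 (by omega : 0 < n); omega⟩
  have hM2 : (m+1)^2 ≤ n := by
    have := Nat.sqrt_le' n; rw [hm] at this; nlinarith
  have hM3 : n < (m+2)^2 := by
    have := Nat.lt_succ_sqrt' n; rw [hm] at this; nlinarith
  have hub := cnt_bound α β h0 hab h1 (m+1)
  have hlb := cnt_bound α β h0 hab h1 m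
  push_cast at hub hlb
  rw [show ((m:ℝ)+1+1) = (m:ℝ)+2 by ring] at hub
  rw [show (m+1+1) = m+2 from rfl] at hub
  have hmono1 : (cnt α β ((m+1)^2 - 1) : ℝ) ≤ cnt α β n := by
    exact_mod_cast cnt_mono α β (by omega)
  have hmono2 : (cnt α β n : ℝ) ≤ cnt α β ((m+2)^2 - 1) := by
    exact_mod_cast cnt_mono α β (by omega)
  set r := β - α with hr
  have hr0 : 0 ≤ r := by simp [hr]; linarith
  have hr1 : r ≤ 1 := by simp [hr]; linarith
  have hcast1 : ((m:ℝ)+1)^2 - 1 ≤ (n:ℝ) := by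
    have : (((m+1)^2 : ℕ):ℝ) ≤ (n:ℝ) := by exact_mod_cast hM2
    push_cast at this; nlinarith
  have hcast2 : (n:ℝ) ≤ ((m:ℝ)+2)^2 - 1 := by
    have : (n:ℝ) + 1 ≤ (((m+2)^2 : ℕ):ℝ) := by exact_mod_cast hM3
    push_cast at this; nlinarith
  have hrn1 : r * (((m:ℝ)+1)^2 - 1) ≤ r * n := mul_le_mul_of_nonneg_left hcast1 hr0
  have hrn2 : r * (n:ℝ) ≤ r * (((m:ℝ)+2)^2 - 1) := mul_le_mul_of_nonneg_left hcast2 hr0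
  have habs1 := abs_le.1 hub
  have habs2 := abs_le.1 hlb
  have ediff : r * (((m:ℝ)+2)^2 - 1) - r * (((m:ℝ)+1)^2 - 1) = r * (2*m+3) := by ring
  have hrd : r * (2*(m:ℝ)+3) ≤ 2*m+3 := by nlinarith [Nat.cast_nonneg (α := ℝ) m]
  have hkey : |(cnt α β n : ℝ) - r * n| ≤ 7*((m:ℝ)+1) := by
    rw [abs_le]
    constructor <;> linarith [habs1.1, habs1.2, habs2.1, habs2.2, ediff, hrd, hrn1, hrn2, hmono1, hmono2, Nat.cast_nonneg (α := ℝ) m]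
  have hnpos : (0:ℝ) < n := by exact_mod_cast hn
  have e2 : (cnt α β n : ℝ)/n - r = ((cnt α β n : ℝ) - r * n)/n := by
    field_simp
  rw [e2, abs_div, abs_of_pos hnpos, hm]
  push_cast
  rw [div_le_div_iff₀ hnpos (by positivity)]
  have hsq : ((m:ℝ)+1)^2 ≤ (n:ℝ) := by
    have h' : (((m+1)^2 : ℕ):ℝ) ≤ (n:ℝ) := by exact_mod_cast hM2
    push_cast at h'; linarith
  calc |(cnt α β n : ℝ) - r * n| * ((m:ℝ)+1)
      ≤ 7*((m:ℝ)+1) * ((m:ℝ)+1) :=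
        mul_le_mul_of_nonneg_right hkey (by positivity)
    _ = 7*(((m:ℝ)+1)^2) := by ring
    _ ≤ 7*(n:ℝ) := by linarith

lemma sqrt_tendsto : Tendsto (fun n : ℕ => (Nat.sqrt n : ℝ)) atTop atTop := by
  apply tendsto_natCast_atTop_atTop.comp
  apply Filter.tendsto_atTop_atTop.2
  intro b
  exact ⟨b^2, fun n hn => Nat.le_sqrt'.2 hn⟩

lemma cnt_tendsto (α β : ℝ) (h0 : 0 ≤ α) (hab : α ≤ β) (h1 : β ≤ 1) :
    Tendsto (fun n : ℕ => (cnt α β n : ℝ)/n) atTop (𝓝 (β - α)) := by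
  rw [tendsto_iff_dist_tendsto_zero]
  have h7 : Tendsto (fun n : ℕ => 7/(Nat.sqrt n : ℝ)) atTop (𝓝 0) :=
    Tendsto.div_atTop tendsto_const_nhds sqrt_tendsto
  refine squeeze_zero' (Filter.Eventually.of_forall fun n => dist_nonneg) ?_ h7
  filter_upwards [Filter.eventually_ge_atTop 1] with n hn
  rw [Real.dist_eq]
  exact cnt_est α β h0 hab h1 n hn


lemma sin_iff (a b : ℝ) (ha : -1 ≤ a) (hab : a ≤ b) (hb : b ≤ 1)
    (t : ℝ) (ht0 : 0 ≤ t) (ht1 : t < 1) :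
    (a ≤ Real.sin (2*π*t) ∧ Real.sin (2*π*t) ≤ b) ↔
    ((arcsin a/(2*π) ≤ t ∧ t ≤ arcsin b/(2*π)) ∨
     (1/2 - arcsin b/(2*π) ≤ t ∧ t ≤ 1/2 - arcsin a/(2*π)) ∨
     (1 + arcsin a/(2*π) ≤ t ∧ t ≤ 1 + arcsin b/(2*π))) := by
  have hπ := Real.pi_pos
  have h2π : (0:ℝ) < 2*π := by linarith
  have ha1 : -1 ≤ a := ha
  have hb1 : b ≤ 1 := hb
  have haa : a ≤ 1 := hab.trans hb
  have hbb : -1 ≤ b := ha.trans hab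
  have key : ∀ θ : ℝ, -(π/2) ≤ θ → θ ≤ π/2 →
      ((a ≤ Real.sin θ ∧ Real.sin θ ≤ b) ↔ (arcsin a ≤ θ ∧ θ ≤ arcsin b)) := by
    intro θ h1 h2
    rw [← Real.le_arcsin_iff_sin_le ⟨h1, h2⟩ ⟨hbb, hb1⟩,
        ← Real.arcsin_le_iff_le_sin ⟨ha1, haa⟩ ⟨h1, h2⟩]
  have q1a : (arcsin a/(2*π) ≤ t) ↔ arcsin a ≤ 2*π*t := by
    rw [div_le_iff₀ h2π, mul_comm]
  have q1b : (t ≤ arcsin b/(2*π)) ↔ 2*π*t ≤ arcsin b := by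
    rw [le_div_iff₀ h2π, mul_comm]
  have q2a : (1/2 - arcsin b/(2*π) ≤ t) ↔ π - arcsin b ≤ 2*π*t := by
    rw [show (1/2 - arcsin b/(2*π) ≤ t) ↔ (1/2 - t ≤ arcsin b/(2*π)) from
      ⟨fun h => by linarith, fun h => by linarith⟩, le_div_iff₀ h2π,
      show (1/2 - t)*(2*π) = π - 2*π*t from by ring]
    constructor <;> intro <;> linarith
  have q2b : (t ≤ 1/2 - arcsin a/(2*π)) ↔ 2*π*t ≤ π - arcsin a := by
    rw [show (t ≤ 1/2 - arcsin a/(2*π)) ↔ (arcsin a/(2*π) ≤ 1/2 - t) from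
      ⟨fun h => by linarith, fun h => by linarith⟩, div_le_iff₀ h2π,
      show (1/2 - t)*(2*π) = π - 2*π*t from by ring]
    constructor <;> intro <;> linarith
  have q3a : (1 + arcsin a/(2*π) ≤ t) ↔ 2*π + arcsin a ≤ 2*π*t := by
    rw [show (1 + arcsin a/(2*π) ≤ t) ↔ (arcsin a/(2*π) ≤ t - 1) from
      ⟨fun h => by linarith, fun h => by linarith⟩, div_le_iff₀ h2π,
      show (t - 1)*(2*π) = 2*π*t - 2*π from by ring]
    constructor <;> intro <;> linarith
  have q3b : (t ≤ 1 + arcsin b/(2*π)) ↔ 2*π*t ≤ 2*π + arcsin b := by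
    rw [show (t ≤ 1 + arcsin b/(2*π)) ↔ (t - 1 ≤ arcsin b/(2*π)) from
      ⟨fun h => by linarith, fun h => by linarith⟩, le_div_iff₀ h2π,
      show (t - 1)*(2*π) = 2*π*t - 2*π from by ring]
    constructor <;> intro <;> linarith
  rw [q1a, q1b, q2a, q2b, q3a, q3b]
  set E := 2*π*t with hE
  have hE0 : 0 ≤ E := by positivity
  have hE2 : E < 2*π := by
    rw [hE]; nlinarith
  have hAa1 := Real.neg_pi_div_two_le_arcsin a
  have hAa2 := Real.arcsin_le_pi_div_two a
  have hAb1 := Real.neg_pi_div_two_le_arcsin b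
  have hAb2 := Real.arcsin_le_pi_div_two b
  constructor
  · intro h
    rcases le_or_gt E (π/2) with h1 | h1
    · exact Or.inl ((key E (by linarith) h1).1 h)
    rcases le_or_gt E (3*π/2) with h2 | h2
    · refine Or.inr (Or.inl ?_)
      have h' : a ≤ Real.sin (π - E) ∧ Real.sin (π - E) ≤ b := by
        rw [Real.sin_pi_sub]; exact h
      have := (key (π - E) (by linarith) (by linarith)).1 h'
      exact ⟨by linarith [this.2], by linarith [this.1]⟩
    · refine Or.inr (Or.inr ?_)
      have h' : a ≤ Real.sin (E - 2*π) ∧ Real.sin (E - 2*π) ≤ b := by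
        rw [Real.sin_sub_two_pi]; exact h
      have := (key (E - 2*π) (by linarith) (by linarith)).1 h'
      exact ⟨by linarith [this.1], by linarith [this.2]⟩
  · rintro (hq | hq | hq)
    · exact (key E (by linarith [hq.1]) (by linarith [hq.2])).2 hq
    · have := (key (π - E) (by linarith [hq.2]) (by linarith [hq.1])).2
        ⟨by linarith [hq.2], by linarith [hq.1]⟩
      rwa [Real.sin_pi_sub] at this
    · have := (key (E - 2*π) (by linarith [hq.1]) (by linarith [hq.2])).2
        ⟨by linarith [hq.1], by linarith [hq.2]⟩
      rwa [Real.sin_sub_two_pi] at this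


lemma fract_sqrt_ne_quarter (k : ℕ) :
    Int.fract (Real.sqrt k) ≠ 1/4 ∧ Int.fract (Real.sqrt k) ≠ 3/4 := by
  constructor <;> intro h
  all_goals {
    have hq : Real.sqrt k = (⌊Real.sqrt k⌋ : ℝ) + Int.fract (Real.sqrt k) := by
      rw [Int.fract]; ring
    set m := ⌊Real.sqrt k⌋ with hm
    have hk : (k : ℝ) = (Real.sqrt k)^2 := (Real.sq_sqrt (by positivity)).symm
    rw [hq, h] at hk
    have h16 : (16 * k : ℤ) = 16*m^2 + 8*m + 1 ∨ (16 * k : ℤ) = 16*m^2 + 24*m + 9 := by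
      first
      | (left; have : (16 * k : ℝ) = ((16*m^2 + 8*m + 1 : ℤ) : ℝ) := by push_cast; rw [hk]; ring
         exact_mod_cast this)
      | (right; have : (16 * k : ℝ) = ((16*m^2 + 24*m + 9 : ℤ) : ℝ) := by push_cast; rw [hk]; ring
         exact_mod_cast this)
    omega }


lemma cnt_tendsto' (α β : ℝ) (hab : α ≤ β) :
    Tendsto (fun n : ℕ => (cnt α β n : ℝ)/n) atTop
      (𝓝 (max 0 (min 1 β) - max 0 (min 1 α))) := by
  rcases lt_or_ge β 0 with hβ | hβ
  · have hz : ∀ n, cnt α β n = 0 := by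
      intro n
      unfold cnt
      rw [Finset.card_eq_zero, Finset.filter_eq_empty_iff]
      rintro k - ⟨-, h2⟩
      linarith [Int.fract_nonneg (Real.sqrt k)]
    have he : max 0 (min 1 β) - max 0 (min 1 α) = 0 := by
      rw [min_eq_right (by linarith : β ≤ (1:ℝ)), min_eq_right (by linarith : α ≤ (1:ℝ)),
        max_eq_left (by linarith : α ≤ (0:ℝ)), max_eq_left (by linarith : β ≤ (0:ℝ))]
      ring
    rw [he]
    simp only [hz]
    simpa using (tendsto_const_nhds : Tendsto (fun _ : ℕ => (0:ℝ)) atTop (𝓝 0))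
  · have hpred : ∀ k : ℕ,
        ((α ≤ Int.fract (Real.sqrt k) ∧ Int.fract (Real.sqrt k) ≤ β) ↔
        (max 0 (min 1 α) ≤ Int.fract (Real.sqrt k) ∧
          Int.fract (Real.sqrt k) ≤ max 0 (min 1 β))) := by
      intro k
      have h0 := Int.fract_nonneg (Real.sqrt k)
      have h1 := Int.fract_lt_one (Real.sqrt k)
      constructor
      · rintro ⟨p, q⟩
        exact ⟨max_le h0 (le_trans (min_le_right 1 α) p),
          le_trans (le_min h1.le q) (le_max_right _ _)⟩
      · rintro ⟨p, q⟩
        constructor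
        · rcases le_total α 1 with hα1 | hα1
          · rw [min_eq_right hα1] at p
            exact le_trans (le_max_right 0 α) p
          · exfalso
            rw [min_eq_left hα1] at p
            have := le_trans (le_max_right (0:ℝ) 1) p
            linarith
        · rw [max_eq_right (le_min zero_le_one hβ)] at q
          exact q.trans (min_le_right 1 β)
    have hc : ∀ n, cnt α β n = cnt (max 0 (min 1 α)) (max 0 (min 1 β)) n := by
      intro n
      unfold cnt
      congr 1
      exact Finset.filter_congr fun k _ => hpred k
    simp only [hc]
    exact cnt_tendsto _ _ (le_max_left _ _)
      (max_le_max le_rfl (min_le_min le_rfl hab))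
      (max_le zero_le_one (min_le_left _ _))

/-- For `−1 ≤ a ≤ b ≤ 1`, the proportion of `k ≤ n` with
`a ≤ sin(2π{√k}) ≤ b` tends to `(arcsin b − arcsin a)/π`. -/
theorem proportion_sin_two_pi_fract_sqrt
    (a b : ℝ) (ha : -1 ≤ a) (hab : a ≤ b) (hb : b ≤ 1) :
    Tendsto
      (fun n : ℕ =>
        (((Finset.Icc 1 n).filter fun k : ℕ =>
            a ≤ Real.sin (2 * π * Int.fract (Real.sqrt k)) ∧
            Real.sin (2 * π * Int.fract (Real.sqrt k)) ≤ b).card : ℝ) / n)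
      atTop (𝓝 ((Real.arcsin b - Real.arcsin a) / π)) := by
  have hπ := Real.pi_pos
  have h2π : (0:ℝ) < 2*π := by linarith
  set u := arcsin a / (2*π) with hu
  set v := arcsin b / (2*π) with hv
  have huv : u ≤ v := by
    rw [hu, hv, div_le_div_iff_of_pos_right h2π]
    exact Real.monotone_arcsin hab
  have hu1 : -(1/4 : ℝ) ≤ u := by
    rw [hu, le_div_iff₀ h2π]
    have := Real.neg_pi_div_two_le_arcsin a
    linarith
  have hu2 : u ≤ (1/4 : ℝ) := by
    rw [hu, div_le_iff₀ h2π]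
    have := Real.arcsin_le_pi_div_two a
    linarith
  have hv1 : -(1/4 : ℝ) ≤ v := by
    rw [hv, le_div_iff₀ h2π]
    have := Real.neg_pi_div_two_le_arcsin b
    linarith
  have hv2 : v ≤ (1/4 : ℝ) := by
    rw [hv, div_le_iff₀ h2π]
    have := Real.arcsin_le_pi_div_two b
    linarith
  -- split counts
  have hsplit : ∀ n : ℕ,
      (((Finset.Icc 1 n).filter fun k : ℕ =>
          a ≤ Real.sin (2 * π * Int.fract (Real.sqrt k)) ∧
          Real.sin (2 * π * Int.fract (Real.sqrt k)) ≤ b).card) =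
      cnt u v n + cnt (1/2 - v) (1/2 - u) n + cnt (1+u) (1+v) n := by
    intro n
    unfold cnt
    have d12 : Disjoint
        ((Finset.Icc 1 n).filter fun k : ℕ =>
          u ≤ Int.fract (Real.sqrt k) ∧ Int.fract (Real.sqrt k) ≤ v)
        ((Finset.Icc 1 n).filter fun k : ℕ =>
          1/2 - v ≤ Int.fract (Real.sqrt k) ∧ Int.fract (Real.sqrt k) ≤ 1/2 - u) := by
      rw [Finset.disjoint_left]
      rintro k hk hk'
      simp only [Finset.mem_filter] at hk hk'
      have : Int.fract (Real.sqrt k) = 1/4 :=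
        le_antisymm (by linarith [hk.2.2]) (by linarith [hk'.2.1])
      exact (fract_sqrt_ne_quarter k).1 this
    have d13 : Disjoint
        ((Finset.Icc 1 n).filter fun k : ℕ =>
          u ≤ Int.fract (Real.sqrt k) ∧ Int.fract (Real.sqrt k) ≤ v)
        ((Finset.Icc 1 n).filter fun k : ℕ =>
          1+u ≤ Int.fract (Real.sqrt k) ∧ Int.fract (Real.sqrt k) ≤ 1+v) := by
      rw [Finset.disjoint_left]
      rintro k hk hk'
      simp only [Finset.mem_filter] at hk hk'
      linarith [hk.2.2, hk'.2.1]
    have d23 : Disjoint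
        ((Finset.Icc 1 n).filter fun k : ℕ =>
          1/2 - v ≤ Int.fract (Real.sqrt k) ∧ Int.fract (Real.sqrt k) ≤ 1/2 - u)
        ((Finset.Icc 1 n).filter fun k : ℕ =>
          1+u ≤ Int.fract (Real.sqrt k) ∧ Int.fract (Real.sqrt k) ≤ 1+v) := by
      rw [Finset.disjoint_left]
      rintro k hk hk'
      simp only [Finset.mem_filter] at hk hk'
      have : Int.fract (Real.sqrt k) = 3/4 :=
        le_antisymm (by linarith [hk.2.2]) (by linarith [hk'.2.1])
      exact (fract_sqrt_ne_quarter k).2 this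
    rw [← Finset.card_union_of_disjoint d12,
      ← Finset.card_union_of_disjoint (Finset.disjoint_union_left.2 ⟨d13, d23⟩),
      ← Finset.filter_or, ← Finset.filter_or]
    congr 1
    apply Finset.filter_congr
    intro k _
    have := sin_iff a b ha hab hb (Int.fract (Real.sqrt k))
      (Int.fract_nonneg _) (Int.fract_lt_one _)
    simpa [or_assoc] using this
  have T1 := cnt_tendsto' u v huv
  have T2 := cnt_tendsto' (1/2 - v) (1/2 - u) (by linarith)
  have T3 := cnt_tendsto' (1+u) (1+v) (by linarith)
  have Tsum := (T1.add T2).add T3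
  have hlim : (max 0 (min 1 v) - max 0 (min 1 u)) +
      (max 0 (min 1 (1/2 - u)) - max 0 (min 1 (1/2 - v))) +
      (max 0 (min 1 (1+v)) - max 0 (min 1 (1+u))) =
      (arcsin b - arcsin a) / π := by
    have ev : max 0 (min 1 v) + max 0 (min 1 (1+v)) = 1 + v := by
      rw [min_eq_right (by linarith : v ≤ (1:ℝ))]
      rcases le_total v 0 with h | h
      · rw [max_eq_left h, min_eq_right (by linarith : 1+v ≤ (1:ℝ)),
          max_eq_right (by linarith : (0:ℝ) ≤ 1+v)]
        ring
      · rw [max_eq_right h, min_eq_left (by linarith : (1:ℝ) ≤ 1+v),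
          max_eq_right (by linarith : (0:ℝ) ≤ (1:ℝ))]
        ring
    have eu : max 0 (min 1 u) + max 0 (min 1 (1+u)) = 1 + u := by
      rw [min_eq_right (by linarith : u ≤ (1:ℝ))]
      rcases le_total u 0 with h | h
      · rw [max_eq_left h, min_eq_right (by linarith : 1+u ≤ (1:ℝ)),
          max_eq_right (by linarith : (0:ℝ) ≤ 1+u)]
        ring
      · rw [max_eq_right h, min_eq_left (by linarith : (1:ℝ) ≤ 1+u),
          max_eq_right (by linarith : (0:ℝ) ≤ (1:ℝ))]
        ring
    have e2 : max 0 (min 1 (1/2 - u)) = 1/2 - u := by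
      rw [min_eq_right (by linarith : 1/2 - u ≤ (1:ℝ)),
        max_eq_right (by linarith : (0:ℝ) ≤ 1/2 - u)]
    have e3 : max 0 (min 1 (1/2 - v)) = 1/2 - v := by
      rw [min_eq_right (by linarith : 1/2 - v ≤ (1:ℝ)),
        max_eq_right (by linarith : (0:ℝ) ≤ 1/2 - v)]
    rw [e2, e3]
    have : v - u = (arcsin b - arcsin a) / (2*π) := by
      rw [hu, hv]; ring
    have h2 : 2*(v - u) = (arcsin b - arcsin a) / π := by
      rw [this]; field_simp
    linarith [ev, eu]
  rw [← hlim]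
  apply Tsum.congr
  intro n
  rw [hsplit n]
  push_cast
  ring
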